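/- Let gᵢ ∈ ℝ, gᵢ ≠ 0, and consider the recursion gᵢ·tan(xᵢ) = −g_{i+1}·tan(x_{i+1}) where xᵢ = aᵢ − a_{i−1} > 0 are the gap lengths with all xᵢ ∈ (0, π/2). Then all the gaps x₂,...,x_{2n} are uniquely determined by x₁, and each xᵢ is a strictly increasing continuous function of x₁. Consequently, the constraint x₁ + ... + x_{2n} = 2π/m determines x₁ (and hence all gaps) uniquely. -/

import Mathlib

open Real Set

lemma stmt15_mono (n : ℕ)
    (g : ℕ → ℝ) (hg : ∀ i < 2 * n, g i ≠ 0)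
    (halt : ∀ i, i + 1 < 2 * n → g i * g (i + 1) < 0)
    (x x' : ℕ → ℝ)
    (hx : ∀ i < 2 * n, x i ∈ Ioo 0 (π / 2))
    (hx' : ∀ i < 2 * n, x' i ∈ Ioo 0 (π / 2))
    (hrec : ∀ i, i + 1 < 2 * n →
      Real.tan (x (i + 1)) = (-(g i) / g (i + 1)) * Real.tan (x i))
    (hrec' : ∀ i, i + 1 < 2 * n →
      Real.tan (x' (i + 1)) = (-(g i) / g (i + 1)) * Real.tan (x' i))
    (h0 : x 0 < x' 0) : ∀ i < 2 * n, x i < x' i := by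
  intro i
  induction i with
  | zero => intro _; exact h0
  | succ k ih =>
    intro hk
    have hk' : k < 2 * n := Nat.lt_of_succ_lt hk
    have hxk := hx k hk'
    have hx'k := hx' k hk'
    have hxk1 := hx (k+1) hk
    have hx'k1 := hx' (k+1) hk
    have hc : (0:ℝ) < -(g k) / g (k + 1) := by
      have h1 : (0:ℝ) < -(g k * g (k+1)) := by linarith [halt k hk]
      have h2 : g (k+1) ≠ 0 := hg (k+1) hk
      have : -(g k) / g (k + 1) = -(g k * g (k+1)) / (g (k+1))^2 := by
        field_simp
      rw [this]
      exact div_pos h1 (by positivity)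
    have htk : Real.tan (x k) < Real.tan (x' k) :=
      Real.tan_lt_tan_of_nonneg_of_lt_pi_div_two hxk.1.le hx'k.2 (ih hk')
    have : Real.tan (x (k+1)) < Real.tan (x' (k+1)) := by
      rw [hrec k hk, hrec' k hk]
      exact mul_lt_mul_of_pos_left htk hc
    by_contra hle
    push_neg at hle
    rcases eq_or_lt_of_le hle with heq | hlt
    · rw [heq] at this; exact lt_irrefl _ this
    · exact absurd (Real.tan_lt_tan_of_nonneg_of_lt_pi_div_two hx'k1.1.le hxk1.2 hlt)
        (by linarith)

theorem stmt15 (n m : ℕ) (hn : 1 ≤ n) (hm : 4 ≤ m)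
    (g : ℕ → ℝ) (hg : ∀ i < 2 * n, g i ≠ 0)
    (halt : ∀ i, i + 1 < 2 * n → g i * g (i + 1) < 0)
    (x x' : ℕ → ℝ)
    (hx : ∀ i < 2 * n, x i ∈ Ioo 0 (π / 2))
    (hx' : ∀ i < 2 * n, x' i ∈ Ioo 0 (π / 2))
    (hrec : ∀ i, i + 1 < 2 * n →
      Real.tan (x (i + 1)) = (-(g i) / g (i + 1)) * Real.tan (x i))
    (hrec' : ∀ i, i + 1 < 2 * n →
      Real.tan (x' (i + 1)) = (-(g i) / g (i + 1)) * Real.tan (x' i)) :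
    (x 0 < x' 0 → ∀ i < 2 * n, x i < x' i) ∧
    ((∑ i ∈ Finset.range (2 * n), x i) = 2 * π / m →
      (∑ i ∈ Finset.range (2 * n), x' i) = 2 * π / m →
      ∀ i < 2 * n, x i = x' i) := by
  have hpos : 0 < 2 * n := by omega
  constructor
  · exact fun h0 => stmt15_mono n g hg halt x x' hx hx' hrec hrec' h0
  · intro hs hs'
    have h0 : x 0 = x' 0 := by
      rcases lt_trichotomy (x 0) (x' 0) with h | h | h
      · exfalso
        have := Finset.sum_lt_sum_of_nonempty (Finset.nonempty_range_iff.mpr (by omega))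
          (fun i hi => stmt15_mono n g hg halt x x' hx hx' hrec hrec' h i
            (Finset.mem_range.mp hi))
        rw [hs, hs'] at this; exact lt_irrefl _ this
      · exact h
      · exfalso
        have := Finset.sum_lt_sum_of_nonempty (Finset.nonempty_range_iff.mpr (by omega))
          (fun i hi => stmt15_mono n g hg halt x' x hx' hx hrec' hrec h i
            (Finset.mem_range.mp hi))
        rw [hs, hs'] at this; exact lt_irrefl _ this
    intro i
    induction i with
    | zero => intro _; exact h0
    | succ k ih =>
      intro hk
      have hk' : k < 2 * n := Nat.lt_of_succ_lt hk
      have hxk1 := hx (k+1) hk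
      have hx'k1 := hx' (k+1) hk
      have htan : Real.tan (x (k+1)) = Real.tan (x' (k+1)) := by
        rw [hrec k hk, hrec' k hk, ih hk']
      have hneg : -(π/2) < (0:ℝ) := by linarith [pi_pos]
      exact Real.tan_inj_of_lt_of_lt_pi_div_two (by linarith [hxk1.1]) hxk1.2
        (by linarith [hx'k1.1]) hx'k1.2 htan
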